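/- Let n ≥ 2 be an integer and ω > 1 − 2/n a real number. Let U ⊆ ℝⁿ be an open connected set and let u : U → ℝⁿ be twice continuously differentiable on U with tr(T(ω,Du(x))·Du(x)ᵗ) = 0 for every x ∈ U. Then there exist a skew-symmetric real n×n matrix A and a vector c ∈ ℝⁿ such that u(x) = Ax + c for all x ∈ U. -/

import Mathlib

open Matrix

/-- Partial derivative `∂f/∂x_j` of a scalar field on `ℝⁿ`. -/
noncomputable def pd {n : ℕ} (f : (Fin n → ℝ) → ℝ) (j : Fin n) (x : Fin n → ℝ) : ℝ :=
  fderiv ℝ f x (Pi.single j 1)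

/-- The Jacobian matrix `(∂u_i/∂x_j)_{i,j}` of a vector field on `ℝⁿ`. -/
noncomputable def jac {n : ℕ} (u : (Fin n → ℝ) → Fin n → ℝ) (x : Fin n → ℝ) :
    Matrix (Fin n) (Fin n) ℝ :=
  Matrix.of fun i j => pd (fun w => u w i) j x

/-- `T ω A = (ω-1)(tr A) Iₙ + A + Aᵗ`. -/
noncomputable def elastT (n : ℕ) (ω : ℝ) (A : Matrix (Fin n) (Fin n) ℝ) :
    Matrix (Fin n) (Fin n) ℝ :=
  ((ω - 1) * Matrix.trace A) • (1 : Matrix (Fin n) (Fin n) ℝ) + A + Aᵀ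

lemma skew_of_trace {n : ℕ} (hn : 2 ≤ n) {ω : ℝ} (hω : 1 - 2 / (n : ℝ) < ω)
    (A : Matrix (Fin n) (Fin n) ℝ) (h : Matrix.trace (elastT n ω A * Aᵀ) = 0) :
    ∀ i j, A i j + A j i = 0 := by
  set t : ℝ := ∑ i, A i i with ht
  have htr : Matrix.trace A = t := rfl
  set Q : ℝ := ∑ i, ∑ j, (A i j + A j i)^2 with hQ
  set X : ℝ := ∑ i, ∑ j, (A i j + A j i) * A i j with hX
  have hXQ : 2 * X = Q := by
    have hc : X = ∑ i, ∑ j, (A j i + A i j) * A j i := by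
      rw [hX]; exact Finset.sum_comm
    rw [hQ, two_mul]
    nth_rewrite 1 [hX]
    nth_rewrite 1 [hc]
    rw [← Finset.sum_add_distrib]
    refine Finset.sum_congr rfl fun i _ => ?_
    rw [← Finset.sum_add_distrib]
    exact Finset.sum_congr rfl fun j _ => by ring
  have hexp : Matrix.trace (elastT n ω A * Aᵀ) = (ω - 1) * t^2 + X := by
    simp only [elastT, Matrix.trace, Matrix.diag, Matrix.mul_apply, Matrix.add_apply,
      Matrix.smul_apply, Matrix.one_apply, Matrix.transpose_apply, htr, smul_eq_mul]
    have step : ∀ i : Fin n, ∑ j, (((ω - 1) * t * if i = j then 1 else 0) + A i j + A j i) * A i j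
        = (ω - 1) * t * A i i + ∑ j, (A i j + A j i) * A i j := by
      intro i
      have : ∀ j : Fin n, (((ω - 1) * t * if i = j then 1 else 0) + A i j + A j i) * A i j
          = (if i = j then (ω - 1) * t * A i j else 0) + (A i j + A j i) * A i j := by
        intro j
        by_cases hij : i = j
        · simp [hij]; ring
        · simp [hij]
      rw [Finset.sum_congr rfl fun j _ => this j, Finset.sum_add_distrib,
        Finset.sum_ite_eq (Finset.univ) i (fun j => (ω - 1) * t * A i j)]
      simp
    rw [Finset.sum_congr rfl fun i _ => step i, Finset.sum_add_distrib, ← Finset.mul_sum, ← ht]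
    ring
  rw [hexp] at h
  have hcs : (∑ i, (A i i + A i i))^2 ≤ (n : ℝ) * ∑ i, (A i i + A i i)^2 := by
    have := sq_sum_le_card_mul_sum_sq (s := (Finset.univ : Finset (Fin n)))
      (f := fun i => A i i + A i i)
    simpa using this
  have hdiag : ∑ i, (A i i + A i i)^2 ≤ Q := by
    rw [hQ]
    refine Finset.sum_le_sum fun i _ => ?_
    exact Finset.single_le_sum (f := fun j => (A i j + A j i)^2)
      (fun j _ => sq_nonneg _) (Finset.mem_univ i)
  have h2t : ∑ i, (A i i + A i i) = 2 * t := by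
    rw [ht, Finset.mul_sum]; exact Finset.sum_congr rfl fun i _ => by ring
  have hQ0 : (0:ℝ) ≤ Q := Finset.sum_nonneg fun i _ => Finset.sum_nonneg fun j _ => sq_nonneg _
  have hn0 : (0:ℝ) < n := by positivity
  have hωn : (n : ℝ) * (1 - ω) < 2 := by
    have h2 : 1 - ω < 2 / (n:ℝ) := by linarith
    calc (n:ℝ) * (1 - ω) < (n:ℝ) * (2 / (n:ℝ)) := mul_lt_mul_of_pos_left h2 hn0
    _ = 2 := by field_simp
  have hQzero : Q = 0 := by
    have h4t : 4 * t^2 ≤ (n:ℝ) * Q := by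
      calc 4 * t^2 = (2*t)^2 := by ring
      _ = (∑ i, (A i i + A i i))^2 := by rw [h2t]
      _ ≤ (n : ℝ) * ∑ i, (A i i + A i i)^2 := hcs
      _ ≤ (n : ℝ) * Q := by nlinarith [hdiag]
    have hXval : X = (1 - ω) * t^2 := by linarith
    have hQval : Q = 2 * (1 - ω) * t^2 := by linarith
    have hnQ : (n:ℝ) * Q = (n:ℝ) * (2 * (1 - ω) * t^2) := by rw [hQval]
    have ht2 : t^2 = 0 := by
      by_contra hne
      have hpos : 0 < t^2 := lt_of_le_of_ne (sq_nonneg t) (Ne.symm hne)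
      nlinarith [mul_lt_mul_of_pos_right hωn hpos, hnQ, h4t]
    rw [hQval, ht2]; ring
  intro i j
  have hsq : (A i j + A j i)^2 = 0 := by
    have h1 : ∑ j', (A i j' + A j' i)^2 = 0 := by
      have hle : ∑ j', (A i j' + A j' i)^2 ≤ Q :=
        Finset.single_le_sum (f := fun i' => ∑ j', (A i' j' + A j' i')^2)
          (fun i' _ => Finset.sum_nonneg fun j' _ => sq_nonneg _) (Finset.mem_univ i)
      have hge : (0:ℝ) ≤ ∑ j', (A i j' + A j' i)^2 :=
        Finset.sum_nonneg fun j' _ => sq_nonneg _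
      linarith [hQzero]
    have hle : (A i j + A j i)^2 ≤ 0 := by
      rw [← h1]
      exact Finset.single_le_sum (f := fun j' => (A i j' + A j' i)^2)
        (fun j' _ => sq_nonneg _) (Finset.mem_univ j)
    nlinarith [sq_nonneg (A i j + A j i)]
  nlinarith [hsq]

lemma clm_ext_single {n : ℕ} {G : Type*} [NormedAddCommGroup G] [NormedSpace ℝ G]
    {φ ψ : (Fin n → ℝ) →L[ℝ] G} (h : ∀ k, φ (Pi.single k 1) = ψ (Pi.single k 1)) : φ = ψ := by
  ext v
  have hv : v = ∑ k, v k • (Pi.single k 1 : Fin n → ℝ) := by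
    funext j
    rw [Finset.sum_apply]
    simp [Pi.single_apply]
  rw [hv, map_sum, map_sum]
  exact Finset.sum_congr rfl fun k _ => by rw [_root_.map_smul, _root_.map_smul, h k]

lemma const_on_of_fderiv_zero {E G : Type*} [NormedAddCommGroup E] [NormedSpace ℝ E]
    [NormedAddCommGroup G] [NormedSpace ℝ G] {U : Set E} (hUo : IsOpen U)
    (hUp : IsPreconnected U) {f : E → G}
    (hdiff : ∀ x ∈ U, DifferentiableAt ℝ f x)
    (hf' : ∀ x ∈ U, fderiv ℝ f x = 0) {x y : E} (hx : x ∈ U) (hy : y ∈ U) : f x = f y := by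
  have loc : ∀ z ∈ U, ∀ᶠ w in nhds z, f w = f z := by
    intro z hz
    obtain ⟨ε, hε, hball⟩ := Metric.isOpen_iff.mp hUo z hz
    filter_upwards [Metric.ball_mem_nhds z hε] with w hw
    exact (convex_ball z ε).is_const_of_fderivWithin_eq_zero
      (fun p hp => (hdiff p (hball hp)).differentiableWithinAt)
      (fun p hp => by
        rw [fderivWithin_of_isOpen Metric.isOpen_ball hp]; exact hf' p (hball hp))
      hw (Metric.mem_ball_self hε)
  set S := {z | z ∈ U ∧ f z = f x} with hS
  set T := {z | z ∈ U ∧ f z ≠ f x} with hT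
  have hSo : IsOpen S := by
    rw [isOpen_iff_mem_nhds]
    rintro z ⟨hzU, hzf⟩
    filter_upwards [loc z hzU, hUo.mem_nhds hzU] with w hw hwU
    exact ⟨hwU, hw.trans hzf⟩
  have hTo : IsOpen T := by
    rw [isOpen_iff_mem_nhds]
    rintro z ⟨hzU, hzf⟩
    filter_upwards [loc z hzU, hUo.mem_nhds hzU] with w hw hwU
    exact ⟨hwU, by rw [hw]; exact hzf⟩
  by_contra hne
  obtain ⟨p, -, ⟨-, hp1⟩, -, hp2⟩ := hUp S T hSo hTo
    (fun z hz => by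
      by_cases h : f z = f x
      · exact Or.inl ⟨hz, h⟩
      · exact Or.inr ⟨hz, h⟩)
    ⟨x, hx, hx, rfl⟩ ⟨y, hy, hy, fun h => hne h.symm⟩
  exact hp2 hp1

lemma pd_pd {n : ℕ} {f : (Fin n → ℝ) → ℝ} {x : Fin n → ℝ}
    (hf : DifferentiableAt ℝ (fderiv ℝ f) x) (j k : Fin n) :
    pd (fun y => pd f j y) k x = fderiv ℝ (fderiv ℝ f) x (Pi.single k 1) (Pi.single j 1) := by
  have h := (hf.hasFDerivAt.clm_apply (hasFDerivAt_const (Pi.single j (1:ℝ)) x)).fderiv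
  calc pd (fun y => pd f j y) k x
      = fderiv ℝ (fun y => fderiv ℝ f y (Pi.single j 1)) x (Pi.single k 1) := rfl
    _ = fderiv ℝ (fderiv ℝ f) x (Pi.single k 1) (Pi.single j 1) := by
        rw [h]; simp

theorem trace_T_jac_zero_implies_affine (n : ℕ) (hn : 2 ≤ n) (ω : ℝ)
    (hω : 1 - 2 / (n : ℝ) < ω)
    (U : Set (Fin n → ℝ)) (hUo : IsOpen U) (hUc : IsConnected U)
    (u : (Fin n → ℝ) → Fin n → ℝ) (hu : ContDiffOn ℝ 2 u U)
    (htr : ∀ x ∈ U, Matrix.trace (elastT n ω (jac u x) * (jac u x)ᵀ) = 0) :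
    ∃ (A : Matrix (Fin n) (Fin n) ℝ) (c : Fin n → ℝ),
      Aᵀ = -A ∧ ∀ x ∈ U, u x = A.mulVec x + c := by
  obtain ⟨x₀, hx₀⟩ := hUc.nonempty
  have hUp : IsPreconnected U := hUc.isPreconnected
  have hC2 : ∀ (i : Fin n), ∀ x ∈ U, ContDiffAt ℝ 2 (fun w => u w i) x := by
    intro i x hx
    have h1 : ContDiffAt ℝ 2 u x := hu.contDiffAt (hUo.mem_nhds hx)
    exact ((ContinuousLinearMap.proj i :
      ((Fin n → ℝ)) →L[ℝ] ℝ).contDiff).comp_contDiffAt x h1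
  have hd1 : ∀ (i : Fin n), ∀ x ∈ U, DifferentiableAt ℝ (fun w => u w i) x :=
    fun i x hx => (hC2 i x hx).differentiableAt (by norm_num)
  have hdf : ∀ (i : Fin n), ∀ x ∈ U, DifferentiableAt ℝ (fderiv ℝ (fun w => u w i)) x := by
    intro i x hx
    exact ((hC2 i x hx).fderiv_right (m := 1) (by norm_num)).differentiableAt (by norm_num)
  have hskew : ∀ x ∈ U, ∀ i j,
      pd (fun w => u w i) j x + pd (fun w => u w j) i x = 0 := by
    intro x hx i j
    exact skew_of_trace hn hω (jac u x) (htr x hx) i j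
  have hg0 : ∀ (i j : Fin n), ∀ x ∈ U,
      fderiv ℝ (fun y => pd (fun w => u w i) j y) x = 0 := by
    intro i j x hx
    set H : Fin n → Fin n → Fin n → ℝ := fun i j k =>
      fderiv ℝ (fderiv ℝ (fun w => u w i)) x (Pi.single k 1) (Pi.single j 1) with hH
    have hsymm : ∀ i j k, H i j k = H i k j := by
      intro i j k
      exact ((hC2 i x hx).isSymmSndFDerivAt (by simp)).eq (Pi.single k 1) (Pi.single j 1)
    have hpdH : ∀ i j k, pd (fun y => pd (fun w => u w i) j y) k x = H i j k :=
      fun i j k => pd_pd (hdf i x hx) j k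
    have hanti : ∀ i j k, H i j k = - H j i k := by
      intro i j k
      rw [← hpdH i j k, ← hpdH j i k]
      have heq : (fun y => pd (fun w => u w i) j y)
          =ᶠ[nhds x] (fun y => - pd (fun w => u w j) i y) := by
        filter_upwards [hUo.mem_nhds hx] with y hy
        have := hskew y hy i j; linarith
      calc pd (fun y => pd (fun w => u w i) j y) k x
          = fderiv ℝ (fun y => pd (fun w => u w i) j y) x (Pi.single k 1) := rfl
        _ = fderiv ℝ (fun y => - pd (fun w => u w j) i y) x (Pi.single k 1) := by
            rw [heq.fderiv_eq]
        _ = (- fderiv ℝ (fun y => pd (fun w => u w j) i y) x) (Pi.single k 1) := by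
            rw [fderiv_fun_neg]
        _ = - pd (fun y => pd (fun w => u w j) i y) k x := rfl
    have hzero : ∀ i j k, H i j k = 0 := by
      intro i j k
      have e1 : H i j k = - H i j k := by
        calc H i j k = - H j i k := hanti i j k
          _ = - H j k i := by rw [hsymm j i k]
          _ = H k j i := by rw [hanti j k i]; ring
          _ = H k i j := hsymm k j i
          _ = - H i k j := hanti k i j
          _ = - H i j k := by rw [← hsymm i j k]
      linarith
    refine clm_ext_single (ψ := 0) fun k => ?_
    have : fderiv ℝ (fun y => pd (fun w => u w i) j y) x (Pi.single k 1) = H i j k := by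
      rw [← hpdH i j k]; rfl
    rw [this, hzero i j k]
    simp
  have hgdiff : ∀ (i j : Fin n), ∀ x ∈ U,
      DifferentiableAt ℝ (fun y => pd (fun w => u w i) j y) x := by
    intro i j x hx
    exact (hdf i x hx).clm_apply (differentiableAt_const _)
  have hgconst : ∀ (i j : Fin n), ∀ x ∈ U,
      pd (fun w => u w i) j x = pd (fun w => u w i) j x₀ :=
    fun i j x hx => const_on_of_fderiv_zero hUo hUp (hgdiff i j) (hg0 i j) hx hx₀
  set A : Matrix (Fin n) (Fin n) ℝ := jac u x₀ with hA
  let L : (Fin n → ℝ) →L[ℝ] (Fin n → ℝ) := LinearMap.toContinuousLinearMap A.mulVecLin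
  have hL : ∀ v, L v = A.mulVec v := fun v => rfl
  have hfderiv_u : ∀ x ∈ U, fderiv ℝ u x = L := by
    intro x hx
    have hpi : fderiv ℝ u x = ContinuousLinearMap.pi fun i => fderiv ℝ (fun w => u w i) x :=
      fderiv_pi (fun i => hd1 i x hx)
    refine clm_ext_single fun k => ?_
    funext i
    rw [hpi]
    have h2 : L (Pi.single k 1) i = A i k := by
      rw [hL, Matrix.mulVec_single]
      exact mul_one _
    rw [h2]
    simp only [ContinuousLinearMap.pi_apply]
    exact hgconst i k x hx
  have hudiff : ∀ x ∈ U, DifferentiableAt ℝ u x := by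
    intro x hx
    exact (hu.contDiffAt (hUo.mem_nhds hx)).differentiableAt (by norm_num)
  refine ⟨A, u x₀ - A.mulVec x₀, ?_, ?_⟩
  · ext i j
    have h := hskew x₀ hx₀ j i
    have h' : A j i + A i j = 0 := h
    simp only [Matrix.transpose_apply, Matrix.neg_apply]
    linarith
  · intro x hx
    have hF : ∀ y ∈ U, DifferentiableAt ℝ (fun y => u y - L y) y := by
      intro y hy
      exact (hudiff y hy).sub (L.differentiableAt)
    have hF0 : ∀ y ∈ U, fderiv ℝ (fun y => u y - L y) y = 0 := by
      intro y hy
      rw [fderiv_fun_sub (hudiff y hy) L.differentiableAt, L.fderiv, hfderiv_u y hy, sub_self]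
    have hc := const_on_of_fderiv_zero hUo hUp hF hF0 hx hx₀
    have hx' : u x - A.mulVec x = u x₀ - A.mulVec x₀ := hc
    have : u x = A.mulVec x + (u x₀ - A.mulVec x₀) := by
      rw [← hx']; abel
    exact this
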